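/- (Corollary to Theorem 3: consistent systems.) Assume XᵀX = λ·I_ℓ for some λ > 0 and Xβ* = y (so r = 0). Let 0 < ε ≤ e^{−2}, let T be an integer with T ≥ 2·log(1/ε²), and assume n ≥ 8p/(1−p) and d̄ ≥ 8·μ·p/(1−p). Let B_{t,j} (t = 1,…,T, j = 1,…,n) be mutually independent {0,1}-valued random variables with P(B_{t,j} = 1) = 1−p, set Z_{t,i} = Σ_{j=1}^n B_{t,j}·1[i ∈ S_j], and starting from any β_0 ∈ ℝ^ℓ define β_t = β_{t−1} − γ_t·Σ_{i=1}^m (Z_{t,i}/(d_i·(1−p)))·(⟨x_i, β_{t−1}⟩ − y_i)·x_i with γ_t = min(1/2, log(1/ε²)/t)/‖XᵀX‖. Then E‖β_T − β*‖₂² ≤ ε²·‖β_0 − β*‖₂². -/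

import Mathlib

open MeasureTheory ProbabilityTheory Matrix Finset

/-- The spectral norm (ℓ2→ℓ2 operator norm) of a real matrix. -/
noncomputable def specNorm {m l : ℕ} (M : Matrix (Fin m) (Fin l) ℝ) : ℝ :=
  ‖LinearMap.toContinuousLinearMap (Matrix.toEuclideanLin M)‖


lemma specNorm_smul_one {l : ℕ} (hl : 0 < l) (lam : ℝ) (h : 0 ≤ lam) :
    specNorm (lam • (1 : Matrix (Fin l) (Fin l) ℝ)) = lam := by
  have : Nontrivial (EuclideanSpace ℝ (Fin l)) := by
    have : Nonempty (Fin l) := ⟨⟨0, hl⟩⟩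
    infer_instance
  have h1 : Matrix.toEuclideanLin (lam • (1 : Matrix (Fin l) (Fin l) ℝ))
      = lam • LinearMap.id := by
    ext v
    simp [Matrix.toEuclideanLin_apply, Matrix.mulVec_smul]
  have h2 : LinearMap.toContinuousLinearMap (LinearMap.id (R := ℝ) (M := EuclideanSpace ℝ (Fin l)))
      = ContinuousLinearMap.id ℝ (EuclideanSpace ℝ (Fin l)) := by
    ext v; rfl
  rw [specNorm, h1, _root_.map_smul, h2]
  rw [norm_smul lam (ContinuousLinearMap.id ℝ (EuclideanSpace ℝ (Fin l)))]
  rw [ContinuousLinearMap.norm_id]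
  simp [Real.norm_eq_abs, abs_of_nonneg h]

lemma integrable_of_bdd {Ω : Type*} [MeasureSpace Ω] [IsProbabilityMeasure (ℙ : Measure Ω)]
    {f : Ω → ℝ} (hf : Measurable f) {C : ℝ} (h : ∀ ω, |f ω| ≤ C) :
    Integrable f ℙ := by
  refine Integrable.mono' (integrable_const C) hf.aestronglyMeasurable ?_
  exact Filter.Eventually.of_forall fun ω => by simpa [Real.norm_eq_abs] using h ω

lemma expectation_bernoulli {Ω : Type*} [MeasureSpace Ω]
    {f : Ω → ℝ} (h01 : ∀ ω, f ω = 0 ∨ f ω = 1)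
    (hmeas : Measurable f) {q : ℝ} (hq : 0 ≤ q)
    (hp : (ℙ : Measure Ω) {ω | f ω = 1} = ENNReal.ofReal q) :
    ∫ ω, f ω = q := by
  have hfi : f = Set.indicator {ω | f ω = 1} (fun _ => (1:ℝ)) := by
    funext ω
    rcases h01 ω with h | h <;> simp [Set.indicator, h]
  have hms : MeasurableSet {ω | f ω = 1} := hmeas (measurableSet_singleton 1)
  rw [hfi, integral_indicator_const _ hms, measureReal_def, hp]
  simp [ENNReal.toReal_ofReal hq]

lemma sum_comm3 {M : Type*} [AddCommMonoid M] {a b c : ℕ} (f : Fin a → Fin b → Fin c → M) :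
    ∑ k, ∑ i, ∑ j, f k i j = ∑ i, ∑ j, ∑ k, f k i j := by
  rw [Finset.sum_comm]
  exact Finset.sum_congr rfl fun i _ => Finset.sum_comm

set_option maxHeartbeats 1000000 in
/-- **Corollary to Theorem 3: consistent systems.**  If moreover `Xβ* = y` (so `r = 0`),
then under the same hypotheses `E‖β_T − β*‖₂² ≤ ε² ‖β_0 − β*‖₂²`. -/
theorem sgc_convergence_l2_consistent
    (m n l T : ℕ) (hn : 1 ≤ n) (hm : 0 < m)
    (S : Fin n → Finset (Fin m)) (d : Fin m → ℕ) (hdpos : ∀ i, 0 < d i)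
    (hdeg : ∀ i : Fin m, (Finset.univ.filter (fun j => i ∈ S j)).card = d i)
    (hpair : ∀ i i' : Fin m, i ≠ i' →
      (Finset.univ.filter (fun j => i ∈ S j ∧ i' ∈ S j)).card * n = d i * d i')
    (hdn : ∀ i, d i ≤ n)
    (p : ℝ) (hp0 : 0 ≤ p) (hp1 : p < 1)
    (X : Matrix (Fin m) (Fin l) ℝ) (y : Fin m → ℝ) (βstar : Fin l → ℝ)
    (hnormal : Xᵀ.mulVec (X.mulVec βstar - y) = 0)
    (hconsistent : X.mulVec βstar = y)
    (lam : ℝ) (hlam : 0 < lam) (hspec : Xᵀ * X = lam • (1 : Matrix (Fin l) (Fin l) ℝ))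
    (σ dbar μ : ℝ)
    (hdbar : dbar = (∑ i, (d i : ℝ)) / m)
    (hσ : σ = n * dbar / (∑ i, ∑ k, X i k ^ 2))
    (hw : ∀ i, (d i : ℝ) = σ * ∑ k, X i k ^ 2)
    (hμ : μ = (∑ i, ∑ k, X i k ^ 2) / (m * specNorm (Xᵀ * X)))
    (ε : ℝ) (hε : 0 < ε) (hεe : ε ≤ Real.exp (-2))
    (hT : 2 * Real.log (1 / ε ^ 2) ≤ (T : ℝ))
    (hn8 : 8 * p / (1 - p) ≤ (n : ℝ))
    (hd8 : 8 * μ * p / (1 - p) ≤ dbar)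
    (Ω : Type*) [MeasureSpace Ω] [IsProbabilityMeasure (ℙ : Measure Ω)]
    (B : Fin T × Fin n → Ω → ℝ)
    (hB01 : ∀ tj ω, B tj ω = 0 ∨ B tj ω = 1)
    (hBmeas : ∀ tj, Measurable (B tj))
    (hBp : ∀ tj, (ℙ : Measure Ω) {ω | B tj ω = 1} = ENNReal.ofReal (1 - p))
    (hBindep : iIndepFun B ℙ)
    (Z : Fin T → Fin m → Ω → ℝ)
    (hZ : ∀ t i ω, Z t i ω = ∑ j, if i ∈ S j then B (t, j) ω else 0)
    (γ : ℕ → ℝ)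
    (hγ : ∀ t : ℕ, γ t = min (1 / 2) (Real.log (1 / ε ^ 2) / t) / specNorm (Xᵀ * X))
    (β0 : Fin l → ℝ) (β : ℕ → Ω → Fin l → ℝ)
    (hβ0 : ∀ ω, β 0 ω = β0)
    (hrec : ∀ t : Fin T, ∀ ω, β (t + 1) ω = β t ω - γ (t + 1) •
      ∑ i, (Z t i ω / ((d i : ℝ) * (1 - p))) •
        (((X.mulVec (β t ω)) i - y i) • (X i))) :
    ∫ ω, ∑ k, (β T ω k - βstar k) ^ 2 ≤
      ε ^ 2 * (∑ k, (β0 k - βstar k) ^ 2) := by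
  classical
  -- ## Basic positivity facts
  have h1p : (0:ℝ) < 1 - p := by linarith
  have hd0 : ∀ i, (0:ℝ) < (d i : ℝ) := fun i => by exact_mod_cast hdpos i
  obtain ⟨i0⟩ : Nonempty (Fin m) := ⟨⟨0, hm⟩⟩
  have hxnn : ∀ i : Fin m, (0:ℝ) ≤ ∑ k, X i k ^ 2 :=
    fun i => Finset.sum_nonneg fun k _ => sq_nonneg _
  have hxpos : ∀ i, 0 < ∑ k, X i k ^ 2 := by
    intro i
    rcases (hxnn i).lt_or_eq with h | h
    · exact h
    · exfalso
      have h2 := hw i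
      rw [← h, mul_zero] at h2
      exact absurd h2 (ne_of_gt (hd0 i))
  have hσpos : 0 < σ := by
    have h2 := hw i0
    nlinarith [hd0 i0, hxpos i0]
  have hl : 0 < l := by
    rcases Nat.eq_zero_or_pos l with h | h
    · exfalso
      have hx := hxpos i0
      subst h
      simp at hx
    · exact h
  have hF : 0 < ∑ i, ∑ k, X i k ^ 2 := Finset.sum_pos (fun i _ => hxpos i) ⟨i0, mem_univ _⟩
  have hspecN : specNorm (Xᵀ * X) = lam := by rw [hspec]; exact specNorm_smul_one hl lam hlam.le
  have hm0 : (0:ℝ) < m := by exact_mod_cast hm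
  have hnpos : (0:ℝ) < n := by exact_mod_cast hn
  have hdsum : ∑ i, (d i:ℝ) = σ * ∑ i, ∑ k, X i k ^ 2 := by
    rw [Finset.mul_sum]
    exact Finset.sum_congr rfl fun i _ => hw i
  have hdbarpos : 0 < dbar := by
    rw [hdbar]
    exact div_pos (Finset.sum_pos (fun i _ => hd0 i) ⟨i0, mem_univ _⟩) hm0
  have hmn : (m:ℝ) = (n:ℝ) := by
    have h1 : ∑ i, (d i:ℝ) = (m:ℝ) * dbar := by rw [hdbar]; field_simp
    have h2 : σ * (∑ i, ∑ k, X i k ^ 2) = (n:ℝ) * dbar := by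
      rw [hσ]; field_simp
    have h3 : (m:ℝ) * dbar = (n:ℝ) * dbar := by rw [← h1, hdsum, h2]
    exact mul_right_cancel₀ (ne_of_gt hdbarpos) h3
  have key8a : p / ((1-p) * n) ≤ 1/8 := by
    rw [div_le_iff₀ (by positivity)]
    rw [div_le_iff₀ h1p] at hn8
    nlinarith
  have hμval : μ = (∑ i, ∑ k, X i k ^ 2) / ((m:ℝ) * lam) := by rw [hμ, hspecN]
  have hμpos : 0 < μ := by
    rw [hμval]; positivity
  have key8b : p / ((1-p) * σ) ≤ lam / 8 := by
    have hμlam : μ * lam = (∑ i, ∑ k, X i k ^ 2) / m := by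
      rw [hμval]; field_simp
    have hσeq : σ = dbar / (μ * lam) := by
      rw [hσ, hμlam, div_div_eq_mul_div, ← hmn]
      field_simp
    have h8 : 8 * μ * p ≤ dbar * (1-p) := by
      rw [div_le_iff₀ h1p] at hd8; linarith
    have hσd : (1-p) * σ = (1-p) * dbar / (μ * lam) := by
      rw [hσeq]; ring
    rw [hσd, div_le_div_iff₀ (by positivity) (by norm_num : (0:ℝ) < 8)]
    have hre : lam * ((1 - p) * dbar / (μ * lam)) = (1-p) * dbar / μ := by
      field_simp
    rw [hre, le_div_iff₀ hμpos]
    nlinarith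
  -- ## Facts about L and γ
  set L := Real.log (1 / ε ^ 2) with hLdef
  have hL4 : (4:ℝ) ≤ L := by
    have hlogε : Real.log ε ≤ -2 := by
      have := Real.log_le_log hε hεe
      simpa [Real.log_exp] using this
    have hL2 : L = -(2 * Real.log ε) := by
      rw [hLdef, one_div, Real.log_inv, Real.log_pow]
      push_cast
      ring
    rw [hL2]; linarith
  have hexpL : Real.exp (-L) = ε ^ 2 := by
    have h1 : -L = Real.log (ε ^ 2) := by
      rw [hLdef, one_div, Real.log_inv, neg_neg]
    rw [h1, Real.exp_log (by positivity)]
  have hγval : ∀ s : ℕ, γ s = min (1/2) (L / s) / lam := fun s => by rw [hγ, hspecN]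
  set gf : ℕ → ℝ := fun s => min (1/2) (L / s) with hgf
  have hgpos : ∀ s : ℕ, 1 ≤ s → 0 < gf s := by
    intro s hs
    have hs' : (0:ℝ) < (s:ℝ) := by
      have : 0 < s := hs
      exact_mod_cast this
    exact lt_min (by norm_num) (div_pos (by linarith) hs')
  have hghalf : ∀ s : ℕ, gf s ≤ 1/2 := fun s => min_le_left _ _
  -- ## |B| ≤ 1
  have hBb : ∀ q ω, |B q ω| ≤ 1 := by
    intro q ω
    rcases hB01 q ω with h | h <;> simp [h]
  -- ## Coordinate recursion
  have hcoord : ∀ (t : ℕ) (ht : t < T) (ω : Ω) (k : Fin l),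
      β (t+1) ω k = β t ω k - γ (t+1) *
        ∑ i, Z ⟨t, ht⟩ i ω / ((d i:ℝ) * (1-p)) * (((X.mulVec (β t ω)) i - y i) * X i k) := by
    intro t ht ω k
    have h2 := congrFun (hrec ⟨t, ht⟩ ω) k
    rw [h2]
    simp only [Pi.sub_apply, Pi.smul_apply, Finset.sum_apply, smul_eq_mul]
  -- ## Representation of β t as a function of the B's
  have hmask : ∀ t : ℕ, Measurable fun (f : (Fin T × Fin n) → ℝ) =>
      (fun q => if (q.1 : ℕ) < t then f q else 0) := by
    intro t
    apply measurable_pi_lambda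
    intro q
    by_cases h : (q.1 : ℕ) < t
    · simpa [h] using measurable_pi_apply q
    · simp only [if_neg h]; exact measurable_const
  have rep : ∀ t : ℕ, t ≤ T → ∃ G : ((Fin T × Fin n) → ℝ) → (Fin l → ℝ), Measurable G ∧
      ∀ ω, β t ω = G (fun q => if (q.1 : ℕ) < t then B q ω else 0) := by
    intro t
    induction t with
    | zero => exact fun _ => ⟨fun _ => β0, measurable_const, fun ω => hβ0 ω⟩
    | succ t ih =>
      intro ht1
      have ht : t < T := lt_of_lt_of_le (Nat.lt_succ_self t) ht1
      obtain ⟨G, hG, hGr⟩ := ih (le_of_lt ht)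
      refine ⟨fun f => G (fun q => if (q.1 : ℕ) < t then f q else 0) - γ (t+1) •
        ∑ i, ((∑ j, if i ∈ S j then f (⟨t, ht⟩, j) else 0) / ((d i:ℝ) * (1-p))) •
          (((X.mulVec (G (fun q => if (q.1 : ℕ) < t then f q else 0))) i - y i) • (X i)),
        ?_, ?_⟩
      · have h1 : Measurable fun f : (Fin T × Fin n) → ℝ =>
            G (fun q => if (q.1 : ℕ) < t then f q else 0) := hG.comp (hmask t)
        refine Measurable.sub h1 (Measurable.const_smul ?_ (γ (t+1)))
        apply Finset.measurable_sum
        intro i _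
        have hc : Measurable fun f : (Fin T × Fin n) → ℝ =>
            (∑ j, if i ∈ S j then f (⟨t, ht⟩, j) else 0) / ((d i:ℝ) * (1-p)) := by
          apply Measurable.div_const
          apply Finset.measurable_sum
          intro j _
          by_cases h : i ∈ S j
          · simpa [h] using measurable_pi_apply ((⟨t, ht⟩ : Fin T), j)
          · simp only [if_neg h]; exact measurable_const
        have he : Measurable fun f : (Fin T × Fin n) → ℝ =>
            ((X.mulVec (G (fun q => if (q.1 : ℕ) < t then f q else 0))) i - y i) := by
          simp only [Matrix.mulVec, dotProduct]
          apply Measurable.sub _ measurable_const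
          apply Finset.measurable_sum
          intro k _
          exact measurable_const.mul ((measurable_pi_apply k).comp h1)
        apply measurable_pi_lambda
        intro k
        simp only [Pi.smul_apply, smul_eq_mul]
        exact hc.mul (he.mul measurable_const)
      · intro ω
        have h0 : (fun q : Fin T × Fin n =>
              if (q.1 : ℕ) < t then (if (q.1 : ℕ) < t + 1 then B q ω else 0) else 0)
            = fun q => if (q.1 : ℕ) < t then B q ω else 0 := by
          funext q
          by_cases h : (q.1 : ℕ) < t
          · simp [h, Nat.lt_succ_of_lt h]
          · simp [h]
        have h2 := hrec ⟨t, ht⟩ ω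
        rw [h2]
        simp only [h0, ← hGr ω, hZ]
        simp [Nat.lt_succ_self]
  have hβmeasC : ∀ t : ℕ, t ≤ T → Measurable fun ω => β t ω := by
    intro t ht
    obtain ⟨G, hG, hGr⟩ := rep t ht
    have h1 : (fun ω => β t ω) = fun ω => G (fun q => if (q.1 : ℕ) < t then B q ω else 0) :=
      funext hGr
    rw [h1]
    apply hG.comp
    apply measurable_pi_lambda
    intro q
    by_cases h : (q.1 : ℕ) < t
    · simpa [h] using hBmeas q
    · simp only [if_neg h]; exact measurable_const
  -- ## Boundedness of β t
  have βbdd : ∀ t : ℕ, t ≤ T → ∃ C : ℝ, 0 ≤ C ∧ ∀ ω k, |β t ω k| ≤ C := by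
    intro t
    induction t with
    | zero =>
      intro _
      refine ⟨∑ k, |β0 k|, Finset.sum_nonneg fun k _ => abs_nonneg _, fun ω k => ?_⟩
      rw [hβ0]
      exact Finset.single_le_sum (f := fun k => |β0 k|) (fun k _ => abs_nonneg _) (mem_univ k)
    | succ t ih =>
      intro ht1
      have ht : t < T := lt_of_lt_of_le (Nat.lt_succ_self t) ht1
      obtain ⟨C, hC0, hC⟩ := ih (le_of_lt ht)
      set D : Fin m → ℝ := fun i => ∑ k', |X i k'| with hD
      have hD0 : ∀ i, 0 ≤ D i := fun i => Finset.sum_nonneg fun k _ => abs_nonneg _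
      have hsum0 : 0 ≤ ∑ i, (n:ℝ) / ((d i:ℝ) * (1-p)) * ((D i * C + |y i|) * D i) := by
        apply Finset.sum_nonneg
        intro i _
        have h1 : 0 ≤ (n:ℝ) / ((d i:ℝ) * (1-p)) :=
          le_of_lt (div_pos hnpos (mul_pos (hd0 i) h1p))
        have h2 : 0 ≤ (D i * C + |y i|) * D i :=
          mul_nonneg (add_nonneg (mul_nonneg (hD0 i) hC0) (abs_nonneg _)) (hD0 i)
        exact mul_nonneg h1 h2
      refine ⟨C + |γ (t+1)| * ∑ i, (n:ℝ) / ((d i:ℝ) * (1-p)) * ((D i * C + |y i|) * D i),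
        ?_, ?_⟩
      · have := mul_nonneg (abs_nonneg (γ (t+1))) hsum0
        linarith
      · intro ω k
        rw [hcoord t ht ω k]
        refine le_trans (abs_sub _ _) ?_
        refine add_le_add (hC ω k) ?_
        rw [abs_mul]
        refine mul_le_mul_of_nonneg_left ?_ (abs_nonneg _)
        refine le_trans (Finset.abs_sum_le_sum_abs _ _) ?_
        apply Finset.sum_le_sum
        intro i _
        rw [abs_mul, abs_div]
        have hZab : |Z ⟨t, ht⟩ i ω| ≤ (n:ℝ) := by
          rw [hZ]
          refine le_trans (Finset.abs_sum_le_sum_abs _ _) ?_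
          calc ∑ j, |if i ∈ S j then B (⟨t, ht⟩, j) ω else 0|
              ≤ ∑ _j : Fin n, (1:ℝ) := by
                apply Finset.sum_le_sum
                intro j _
                by_cases h : i ∈ S j
                · simpa [h] using hBb (⟨t, ht⟩, j) ω
                · simp [h]
            _ = (n:ℝ) := by simp
        have hdenpos : (0:ℝ) < (d i:ℝ) * (1-p) := mul_pos (hd0 i) h1p
        have habs_den : |(d i:ℝ) * (1-p)| = (d i:ℝ) * (1-p) := abs_of_pos hdenpos
        rw [habs_den, abs_mul]
        have hme : |(X.mulVec (β t ω)) i - y i| ≤ D i * C + |y i| := by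
          refine le_trans (abs_sub _ _) (add_le_add ?_ le_rfl)
          simp only [Matrix.mulVec, dotProduct]
          refine le_trans (Finset.abs_sum_le_sum_abs _ _) ?_
          rw [hD, Finset.sum_mul]
          apply Finset.sum_le_sum
          intro k' _
          rw [abs_mul]
          exact mul_le_mul_of_nonneg_left (hC ω k') (abs_nonneg _)
        have hXk : |X i k| ≤ D i :=
          Finset.single_le_sum (f := fun k' => |X i k'|) (fun k' _ => abs_nonneg _) (mem_univ k)
        have hq1 : |Z ⟨t, ht⟩ i ω| / ((d i:ℝ) * (1-p)) ≤ (n:ℝ) / ((d i:ℝ) * (1-p)) := by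
          gcongr
        have hq2 : |(X.mulVec (β t ω)) i - y i| * |X i k| ≤ (D i * C + |y i|) * D i := by
          refine mul_le_mul hme hXk (abs_nonneg _) ?_
          exact add_nonneg (mul_nonneg (hD0 i) hC0) (abs_nonneg _)
        refine mul_le_mul hq1 hq2 ?_ ?_
        · exact mul_nonneg (abs_nonneg _) (abs_nonneg _)
        · exact le_of_lt (div_pos hnpos hdenpos)
  -- ## The one-step contraction estimate
  have step : ∀ t : ℕ, t < T →
      (∫ ω, ∑ k, (β (t+1) ω k - βstar k)^2) ≤
        (1 - gf (t+1)) * ∫ ω, ∑ k, (β t ω k - βstar k)^2 := by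
    intro t ht
    set tF : Fin T := ⟨t, ht⟩ with htF
    obtain ⟨Cb, hCb0, hCb⟩ := βbdd t ht.le
    have hβtm : Measurable fun ω => β t ω := hβmeasC t ht.le
    obtain ⟨G, hG, hGr⟩ := rep t ht.le
    -- the residual vector u
    set u : Fin m → Ω → ℝ := fun i ω => ∑ k, X i k * (β t ω k - βstar k) with hu
    have hum : ∀ i, Measurable (u i) := by
      intro i
      apply Finset.measurable_sum
      intro k _
      exact measurable_const.mul (((measurable_pi_apply k).comp hβtm).sub measurable_const)
    set Cu : Fin m → ℝ := fun i => ∑ k, |X i k| * (Cb + |βstar k|) with hCu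
    have hCu0 : ∀ i, 0 ≤ Cu i := fun i => Finset.sum_nonneg fun k _ =>
      mul_nonneg (abs_nonneg _) (add_nonneg hCb0 (abs_nonneg _))
    have hub : ∀ i ω, |u i ω| ≤ Cu i := by
      intro i ω
      refine le_trans (Finset.abs_sum_le_sum_abs _ _) (Finset.sum_le_sum fun k _ => ?_)
      rw [abs_mul]
      exact mul_le_mul_of_nonneg_left
        (le_trans (abs_sub _ _) (add_le_add (hCb ω k) le_rfl)) (abs_nonneg _)
    have hZm : ∀ i, Measurable (Z tF i) := by
      intro i
      have h1 : Z tF i = fun ω => ∑ j, if i ∈ S j then B (tF, j) ω else 0 :=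
        funext fun ω => hZ tF i ω
      rw [h1]
      apply Finset.measurable_sum
      intro j _
      by_cases h : i ∈ S j
      · simpa [h] using hBmeas (tF, j)
      · simp only [if_neg h]; exact measurable_const
    have hZb : ∀ i ω, |Z tF i ω| ≤ (n:ℝ) := by
      intro i ω
      rw [hZ]
      refine le_trans (Finset.abs_sum_le_sum_abs _ _) ?_
      calc ∑ j, |if i ∈ S j then B (tF, j) ω else 0|
          ≤ ∑ _j : Fin n, (1:ℝ) := by
            apply Finset.sum_le_sum
            intro j _
            by_cases h : i ∈ S j
            · simpa [h] using hBb (tF, j) ω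
            · simp [h]
        _ = (n:ℝ) := by simp
    have hdenpos : ∀ i, (0:ℝ) < (d i:ℝ) * (1-p) := fun i => mul_pos (hd0 i) h1p
    -- independence of the step-t Bernoullis from β t
    have hIndep : IndepFun (fun ω => fun j : Fin n => B (tF, j) ω) (fun ω => β t ω) ℙ := by
      classical
      set Cs : Finset (Fin T × Fin n) := univ.filter (fun q => q.1 = tF) with hCs
      set Ps : Finset (Fin T × Fin n) := univ.filter (fun q => (q.1 : ℕ) < t) with hPs
      have hdisj : Disjoint Cs Ps := by
        rw [Finset.disjoint_left]
        intro q hq1 hq2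
        rw [hCs, Finset.mem_filter] at hq1
        rw [hPs, Finset.mem_filter] at hq2
        rw [hq1.2] at hq2
        exact absurd hq2.2 (lt_irrefl t)
      have hbase := hBindep.indepFun_finset Cs Ps hdisj hBmeas
      have hmem : ∀ j : Fin n, ((tF, j) : Fin T × Fin n) ∈ Cs := fun j => by
        rw [hCs, Finset.mem_filter]; exact ⟨mem_univ _, rfl⟩
      have hφm : Measurable fun g : {x // x ∈ Cs} → ℝ =>
          (fun j : Fin n => g ⟨(tF, j), hmem j⟩) :=
        measurable_pi_lambda _ fun j => measurable_pi_apply _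
      have hψm : Measurable fun g : {x // x ∈ Ps} → ℝ =>
          G (fun q => if h : q ∈ Ps then g ⟨q, h⟩ else 0) := by
        apply hG.comp
        apply measurable_pi_lambda
        intro q
        by_cases h : q ∈ Ps
        · simp only [dif_pos h]; exact measurable_pi_apply _
        · simp only [dif_neg h]; exact measurable_const
      have hcomp := hbase.comp hφm hψm
      have e2 : ((fun g : {x // x ∈ Ps} → ℝ => G (fun q => if h : q ∈ Ps then g ⟨q, h⟩ else 0))
          ∘ (fun a (i : {x // x ∈ Ps}) => B i a)) = fun ω => β t ω := by
        funext ω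
        rw [Function.comp_apply, hGr ω]
        refine congrArg G ?_
        funext q
        by_cases h : (q.1 : ℕ) < t
        · have hqmem : q ∈ Ps := by rw [hPs, Finset.mem_filter]; exact ⟨mem_univ _, h⟩
          rw [dif_pos hqmem, if_pos h]
        · have hqmem : q ∉ Ps := by rw [hPs, Finset.mem_filter]; simp [h]
          rw [dif_neg hqmem, if_neg h]
      rw [e2] at hcomp
      exact hcomp
    -- expectations of the Bernoulli variables
    have hEB : ∀ q, ∫ ω, B q ω = 1 - p := fun q =>
      expectation_bernoulli (hB01 q) (hBmeas q) (by linarith) (hBp q)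
    have hBint : ∀ q, Integrable (B q) ℙ := fun q => integrable_of_bdd (hBmeas q) (hBb q)
    have hEBB : ∀ q q', q ≠ q' → ∫ ω, B q ω * B q' ω = (1-p)^2 := by
      intro q q' hqq
      rw [(hBindep.indepFun hqq).integral_fun_mul_eq_mul_integral (hBmeas q).aestronglyMeasurable
        (hBmeas q').aestronglyMeasurable, hEB, hEB]
      ring
    -- expectation of Z
    have hitei : ∀ (i : Fin m) (j : Fin n),
        Integrable (fun ω => if i ∈ S j then B (tF, j) ω else 0) ℙ := by
      intro i j
      by_cases h : i ∈ S j
      · simpa [h] using hBint (tF, j)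
      · simp only [if_neg h]; exact integrable_const 0
    have hEZ : ∀ i, ∫ ω, Z tF i ω = (d i:ℝ) * (1-p) := by
      intro i
      have h1 : ∀ ω:Ω, Z tF i ω = ∑ j, if i ∈ S j then B (tF, j) ω else 0 := hZ tF i
      simp only [h1]
      rw [integral_finset_sum _ (fun j _ => hitei i j)]
      have h2 : ∀ j : Fin n, ∫ ω, (if i ∈ S j then B (tF, j) ω else 0) =
          (if i ∈ S j then (1-p) else 0) := by
        intro j
        by_cases h : i ∈ S j
        · simp only [if_pos h]; exact hEB (tF, j)
        · simp only [if_neg h, integral_zero]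
      rw [Finset.sum_congr rfl fun j _ => h2 j, Finset.sum_ite, Finset.sum_const,
        Finset.sum_const_zero, add_zero, nsmul_eq_mul, hdeg i]
    -- expectation of Z i * Z i'
    have hEZZ : ∀ i i', ∫ ω, Z tF i ω * Z tF i' ω =
        (1-p)^2 * ((d i : ℝ) * (d i')) + ((1-p) - (1-p)^2) *
          ((univ.filter fun j => i ∈ S j ∧ i' ∈ S j).card : ℝ) := by
      intro i i'
      have hpt : ∀ ω:Ω, Z tF i ω * Z tF i' ω = ∑ j, ∑ j',
          (if i ∈ S j then B (tF, j) ω else 0) * (if i' ∈ S j' then B (tF, j') ω else 0) := by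
        intro ω
        rw [hZ, hZ, Finset.sum_mul_sum]
      simp only [hpt]
      have hint1 : ∀ (j j' : Fin n), Integrable (fun ω =>
          (if i ∈ S j then B (tF, j) ω else 0) * (if i' ∈ S j' then B (tF, j') ω else 0)) ℙ := by
        intro j j'
        by_cases h : i ∈ S j <;> by_cases h' : i' ∈ S j'
        · simp only [if_pos h, if_pos h']
          exact integrable_of_bdd ((hBmeas _).mul (hBmeas _))
            (C := 1) (fun ω => by rw [abs_mul]
                                  exact mul_le_one₀ (hBb _ ω) (abs_nonneg _) (hBb _ ω))
        · simp only [if_pos h, if_neg h', mul_zero]; exact integrable_const 0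
        · simp only [if_neg h, zero_mul]; exact integrable_const 0
        · simp only [if_neg h, zero_mul]; exact integrable_const 0
      rw [integral_finset_sum _ (fun j _ => integrable_finset_sum _ (fun j' _ => hint1 j j'))]
      have h3 : ∀ j : Fin n, ∫ ω, ∑ j', (if i ∈ S j then B (tF, j) ω else 0) *
          (if i' ∈ S j' then B (tF, j') ω else 0)
          = ∑ j', ∫ ω, (if i ∈ S j then B (tF, j) ω else 0) *
            (if i' ∈ S j' then B (tF, j') ω else 0) :=
        fun j => integral_finset_sum _ (fun j' _ => hint1 j j')
      simp only [h3]
      have h4 : ∀ j j' : Fin n, ∫ ω, (if i ∈ S j then B (tF, j) ω else 0) *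
          (if i' ∈ S j' then B (tF, j') ω else 0)
          = (if i ∈ S j then (1:ℝ) else 0) * (if i' ∈ S j' then (1:ℝ) else 0) * (1-p)^2
            + (if j = j' then (if i ∈ S j ∧ i' ∈ S j' then (1-p) - (1-p)^2 else 0) else 0) := by
        intro j j'
        by_cases h : i ∈ S j <;> by_cases h' : i' ∈ S j'
        · simp only [if_pos h, if_pos h']
          by_cases hjj : j = j'
          · subst hjj
            have hBB : ∀ ω:Ω, B (tF, j) ω * B (tF, j) ω = B (tF, j) ω := fun ω => by
              rcases hB01 (tF, j) ω with h0 | h0 <;> rw [h0] <;> ring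
            simp only [hBB]
            rw [hEB (tF, j)]
            simp only [if_true, eq_self_iff_true, and_self]
            simp [h, h']
          · rw [hEBB (tF, j) (tF, j') (by simp [hjj]), if_neg hjj]
            ring
        · simp only [if_pos h, if_neg h', mul_zero, integral_zero, one_mul, zero_mul]
          have : ¬(i ∈ S j ∧ i' ∈ S j') := fun hc => h' hc.2
          simp [this]
        · simp only [if_neg h, zero_mul, integral_zero]
          have : ¬(i ∈ S j ∧ i' ∈ S j') := fun hc => h hc.1
          simp [this]
        · simp only [if_neg h, zero_mul, integral_zero]
          have : ¬(i ∈ S j ∧ i' ∈ S j') := fun hc => h hc.1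
          simp [this]
      simp only [h4]
      have h5 : ∑ j, (if i ∈ S j then (1:ℝ) else 0) = (d i : ℝ) := by
        rw [Finset.sum_boole]
        exact_mod_cast hdeg i
      have h5' : ∑ j', (if i' ∈ S j' then (1:ℝ) else 0) = (d i' : ℝ) := by
        rw [Finset.sum_boole]
        exact_mod_cast hdeg i' 
      have h6 : ∑ j, ∑ j', ((if i ∈ S j then (1:ℝ) else 0) * (if i' ∈ S j' then (1:ℝ) else 0)
          * (1-p)^2) = (1-p)^2 * ((d i:ℝ) * (d i')) := by
        have h61 : ∀ j : Fin n, ∑ j', ((if i ∈ S j then (1:ℝ) else 0) *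
            (if i' ∈ S j' then (1:ℝ) else 0) * (1-p)^2)
            = (if i ∈ S j then (1:ℝ) else 0) * ((∑ j', if i' ∈ S j' then (1:ℝ) else 0)
              * (1-p)^2) := by
          intro j
          conv_rhs => rw [Finset.sum_mul]
          rw [Finset.mul_sum]
          exact Finset.sum_congr rfl fun j' _ => by ring
        rw [Finset.sum_congr rfl fun j _ => h61 j, ← Finset.sum_mul, h5, h5']
        ring
      have h7 : ∑ j, ∑ j', (if j = j' then
            (if i ∈ S j ∧ i' ∈ S j' then (1-p)-(1-p)^2 else 0) else 0)
          = ((1-p) - (1-p)^2) * ((univ.filter fun j => i ∈ S j ∧ i' ∈ S j).card : ℝ) := by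
        have hinner : ∀ j : Fin n, (∑ j', if j = j' then
            (if i ∈ S j ∧ i' ∈ S j' then (1-p)-(1-p)^2 else 0) else 0)
            = (if i ∈ S j ∧ i' ∈ S j then (1-p)-(1-p)^2 else 0) := by
          intro j
          rw [Finset.sum_ite_eq univ j
            (fun j' => if i ∈ S j ∧ i' ∈ S j' then (1-p)-(1-p)^2 else 0)]
          simp
        rw [Finset.sum_congr rfl fun j _ => hinner j, Finset.sum_ite, Finset.sum_const,
          Finset.sum_const_zero, add_zero, nsmul_eq_mul]
        ring
      simp only [Finset.sum_add_distrib]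
      rw [h6, h7]
    -- the coefficient α
    set c2 : Fin m → Fin m → ℝ := fun i i' => ∑ k, X i k * X i' k with hc2
    set α : Fin m → Fin m → ℝ := fun i i' =>
      (∫ ω, Z tF i ω * Z tF i' ω) / (((d i:ℝ) * (d i':ℝ)) * (1-p)^2) with hα
    have hαoff : ∀ i i', i ≠ i' → α i i' = 1 + p / ((1-p) * n) := by
      intro i i' hne
      have hKval : ((univ.filter fun j => i ∈ S j ∧ i' ∈ S j).card : ℝ) * n
          = (d i : ℝ) * (d i') := by exact_mod_cast hpair i i' hne
      have hKv : ((univ.filter fun j => i ∈ S j ∧ i' ∈ S j).card : ℝ)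
          = (d i : ℝ) * (d i') / n := by
        rw [eq_div_iff (ne_of_gt hnpos)]; exact hKval
      have hAne : ((d i:ℝ) * (d i':ℝ)) ≠ 0 := ne_of_gt (mul_pos (hd0 i) (hd0 i'))
      have h1pne : (1-p) ≠ 0 := ne_of_gt h1p
      have hnne : (n:ℝ) ≠ 0 := ne_of_gt hnpos
      have hdi0 : (d i:ℝ) ≠ 0 := ne_of_gt (hd0 i)
      have hdi'0 : (d i':ℝ) ≠ 0 := ne_of_gt (hd0 i')
      simp only [hα]
      rw [hEZZ i i', hKv]
      field_simp
      ring
    have hαdiag : ∀ i, α i i = 1 + p / ((1-p) * (d i)) := by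
      intro i
      have hKd : ((univ.filter fun j => i ∈ S j ∧ i ∈ S j).card : ℝ) = (d i : ℝ) := by
        have : (univ.filter fun j => i ∈ S j ∧ i ∈ S j) = (univ.filter fun j => i ∈ S j) := by
          apply Finset.filter_congr
          intro j _
          simp
        rw [this, hdeg i]
      have hdne : (d i:ℝ) ≠ 0 := ne_of_gt (hd0 i)
      have h1pne : (1-p) ≠ 0 := ne_of_gt h1p
      simp only [hα]
      rw [hEZZ i i, hKd]
      field_simp
      ring
    -- factorization of mixed integrals via independence
    have hφm : ∀ i : Fin m, Measurable fun b : Fin n → ℝ => ∑ j, if i ∈ S j then b j else 0 := by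
      intro i
      apply Finset.measurable_sum
      intro j _
      by_cases h : i ∈ S j
      · simpa [h] using measurable_pi_apply j
      · simp only [if_neg h]; exact measurable_const
    have hψm : ∀ i : Fin m, Measurable fun c : Fin l → ℝ => ∑ k, X i k * (c k - βstar k) := by
      intro i
      apply Finset.measurable_sum
      intro k _
      exact measurable_const.mul ((measurable_pi_apply k).sub measurable_const)
    have hintu : ∀ i i', Integrable (fun ω => u i ω * u i' ω) ℙ := fun i i' =>
      integrable_of_bdd ((hum i).mul (hum i')) (C := Cu i * Cu i') (fun ω => by
        rw [abs_mul]
        exact mul_le_mul (hub i ω) (hub i' ω) (abs_nonneg _) (hCu0 i))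
    have hintu2 : ∀ i, Integrable (fun ω => (u i ω)^2) ℙ := by
      intro i
      have : (fun ω => (u i ω)^2) = fun ω => u i ω * u i ω := by
        funext ω; ring
      rw [this]; exact hintu i i
    have hfact1 : ∀ i, ∫ ω, Z tF i ω * (u i ω)^2 = ((d i:ℝ) * (1-p)) * ∫ ω, (u i ω)^2 := by
      intro i
      have hψsq : Measurable fun c : Fin l → ℝ => (∑ k, X i k * (c k - βstar k))^2 :=
        (hψm i).pow_const 2
      have hcomp := hIndep.comp (hφm i) hψsq
      have e1 : ((fun b : Fin n → ℝ => ∑ j, if i ∈ S j then b j else 0)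
          ∘ (fun ω => fun j : Fin n => B (tF, j) ω)) = Z tF i :=
        funext fun ω => (hZ tF i ω).symm
      have e2 : ((fun c : Fin l → ℝ => (∑ k, X i k * (c k - βstar k))^2)
          ∘ (fun ω => β t ω)) = fun ω => (u i ω)^2 := rfl
      rw [e1, e2] at hcomp
      rw [hcomp.integral_fun_mul_eq_mul_integral (hZm i).aestronglyMeasurable
        ((hum i).pow_const 2).aestronglyMeasurable, hEZ i]
    have hfact2 : ∀ i i', ∫ ω, (Z tF i ω * Z tF i' ω) * (u i ω * u i' ω)
        = (∫ ω, Z tF i ω * Z tF i' ω) * ∫ ω, u i ω * u i' ω := by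
      intro i i'
      have hφ2 : Measurable fun b : Fin n → ℝ =>
          (∑ j, if i ∈ S j then b j else 0) * (∑ j, if i' ∈ S j then b j else 0) :=
        (hφm i).mul (hφm i')
      have hψ2 : Measurable fun c : Fin l → ℝ =>
          (∑ k, X i k * (c k - βstar k)) * (∑ k, X i' k * (c k - βstar k)) :=
        (hψm i).mul (hψm i')
      have hcomp := hIndep.comp hφ2 hψ2
      have e1 : ((fun b : Fin n → ℝ =>
          (∑ j, if i ∈ S j then b j else 0) * (∑ j, if i' ∈ S j then b j else 0))
          ∘ (fun ω => fun j : Fin n => B (tF, j) ω)) = fun ω => Z tF i ω * Z tF i' ω :=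
        funext fun ω => by
          rw [Function.comp_apply, ← hZ tF i ω, ← hZ tF i' ω]
      have e2 : ((fun c : Fin l → ℝ =>
          (∑ k, X i k * (c k - βstar k)) * (∑ k, X i' k * (c k - βstar k)))
          ∘ (fun ω => β t ω)) = fun ω => u i ω * u i' ω := rfl
      rw [e1, e2] at hcomp
      exact hcomp.integral_fun_mul_eq_mul_integral ((hZm i).mul (hZm i')).aestronglyMeasurable
        ((hum i).mul (hum i')).aestronglyMeasurable
    -- structure facts about X
    have hXTX : ∀ k k' : Fin l, ∑ i, X i k * X i k' = (if k = k' then lam else 0) := by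
      intro k k'
      have h := congrFun (congrFun hspec k) k'
      rw [Matrix.mul_apply] at h
      simp only [Matrix.transpose_apply, Matrix.smul_apply, Matrix.one_apply,
        smul_eq_mul] at h
      rw [h]
      by_cases hkk : k = k' <;> simp [hkk]
    have hUX : ∀ (ω:Ω) (k : Fin l), ∑ i, u i ω * X i k = lam * (β t ω k - βstar k) := by
      intro ω k
      have h1 : ∀ i, u i ω * X i k = ∑ k', X i k * X i k' * (β t ω k' - βstar k') := by
        intro i
        have hui : u i ω = ∑ k', X i k' * (β t ω k' - βstar k') := rfl
        rw [hui, Finset.sum_mul]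
        exact Finset.sum_congr rfl fun k' _ => by ring
      rw [Finset.sum_congr rfl fun i _ => h1 i, Finset.sum_comm]
      have h2 : ∀ k', ∑ i, X i k * X i k' * (β t ω k' - βstar k')
          = (if k = k' then lam else 0) * (β t ω k' - βstar k') := by
        intro k'
        rw [← Finset.sum_mul, hXTX k k']
      rw [Finset.sum_congr rfl fun k' _ => h2 k']
      simp only [ite_mul, zero_mul]
      rw [Finset.sum_ite_eq univ k (fun k' => lam * (β t ω k' - βstar k'))]
      simp
    have hF2 : ∀ ω:Ω, ∑ i, (u i ω)^2 = lam * ∑ k, (β t ω k - βstar k)^2 := by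
      intro ω
      have h1 : ∀ i, (u i ω)^2 = ∑ k, (u i ω * X i k) * (β t ω k - βstar k) := by
        intro i
        have hui : u i ω = ∑ k, X i k * (β t ω k - βstar k) := rfl
        calc (u i ω)^2 = u i ω * u i ω := pow_two _
          _ = u i ω * ∑ k, X i k * (β t ω k - βstar k) := by rw [← hui]
          _ = ∑ k, (u i ω * X i k) * (β t ω k - βstar k) := by
              rw [Finset.mul_sum]
              exact Finset.sum_congr rfl fun k _ => by ring
      rw [Finset.sum_congr rfl fun i _ => h1 i, Finset.sum_comm]
      have h2 : ∀ k, ∑ i, (u i ω * X i k) * (β t ω k - βstar k)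
          = lam * (β t ω k - βstar k)^2 := by
        intro k
        rw [← Finset.sum_mul, hUX ω k]
        ring
      rw [Finset.sum_congr rfl fun k _ => h2 k, ← Finset.mul_sum]
    -- pointwise expansion of the squared error
    have hMy : ∀ (ω:Ω) (i : Fin m), (X.mulVec (β t ω)) i - y i = u i ω := by
      intro ω i
      have hy : y i = ∑ k, X i k * βstar k := by
        rw [← hconsistent]
        simp [Matrix.mulVec, dotProduct]
      have hui : u i ω = ∑ k, X i k * (β t ω k - βstar k) := rfl
      simp only [Matrix.mulVec, dotProduct, hy, hui, mul_sub]
      rw [Finset.sum_sub_distrib]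
    have hBk : ∀ (ω:Ω) (k : Fin l), β (t+1) ω k - βstar k = (β t ω k - βstar k)
        - γ (t+1) * ∑ i, Z tF i ω / ((d i:ℝ) * (1-p)) * (u i ω * X i k) := by
      intro ω k
      have h := hcoord t ht ω k
      simp only [hMy] at h
      rw [h]
      ring
    have hexp : ∀ ω:Ω, (∑ k, (β (t+1) ω k - βstar k)^2)
        = (∑ k, (β t ω k - βstar k)^2)
          - 2 * γ (t+1) * (∑ i, Z tF i ω / ((d i:ℝ) * (1-p)) * (u i ω)^2)
          + (γ (t+1))^2 * ∑ i, ∑ i', (Z tF i ω * Z tF i' ω) /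
              (((d i:ℝ) * (1-p)) * ((d i':ℝ) * (1-p))) * ((u i ω * u i' ω) * c2 i i') := by
      intro ω
      have h1 : ∀ k : Fin l, (β (t+1) ω k - βstar k)^2
          = (β t ω k - βstar k)^2
            - 2 * γ (t+1) * ((β t ω k - βstar k) *
                ∑ i, Z tF i ω / ((d i:ℝ) * (1-p)) * (u i ω * X i k))
            + (γ (t+1))^2 * (∑ i, Z tF i ω / ((d i:ℝ) * (1-p)) * (u i ω * X i k))^2 := by
        intro k
        rw [hBk ω k]
        ring
      rw [Finset.sum_congr rfl fun k _ => h1 k]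
      simp only [Finset.sum_add_distrib, Finset.sum_sub_distrib]
      rw [← Finset.mul_sum, ← Finset.mul_sum]
      have hswap1 : ∑ k, ((β t ω k - βstar k) *
          ∑ i, Z tF i ω / ((d i:ℝ) * (1-p)) * (u i ω * X i k))
          = ∑ i, Z tF i ω / ((d i:ℝ) * (1-p)) * (u i ω)^2 := by
        have ha : ∀ k, (β t ω k - βstar k) *
            ∑ i, Z tF i ω / ((d i:ℝ) * (1-p)) * (u i ω * X i k)
            = ∑ i, Z tF i ω / ((d i:ℝ) * (1-p)) * u i ω * (X i k * (β t ω k - βstar k)) := by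
          intro k
          rw [Finset.mul_sum]
          exact Finset.sum_congr rfl fun i _ => by ring
        rw [Finset.sum_congr rfl fun k _ => ha k, Finset.sum_comm]
        refine Finset.sum_congr rfl fun i _ => ?_
        rw [← Finset.mul_sum]
        have hui : ∑ k, X i k * (β t ω k - βstar k) = u i ω := rfl
        rw [hui]
        ring
      have hswap2 : ∑ k, (∑ i, Z tF i ω / ((d i:ℝ) * (1-p)) * (u i ω * X i k))^2
          = ∑ i, ∑ i', (Z tF i ω * Z tF i' ω) /
              (((d i:ℝ) * (1-p)) * ((d i':ℝ) * (1-p))) * ((u i ω * u i' ω) * c2 i i') := by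
        have hb : ∀ k, (∑ i, Z tF i ω / ((d i:ℝ) * (1-p)) * (u i ω * X i k))^2
            = ∑ i, ∑ i', (Z tF i ω / ((d i:ℝ) * (1-p)) * (u i ω * X i k)) *
                (Z tF i' ω / ((d i':ℝ) * (1-p)) * (u i' ω * X i' k)) := by
          intro k
          rw [pow_two, Finset.sum_mul_sum]
        rw [Finset.sum_congr rfl fun k _ => hb k, sum_comm3]
        refine Finset.sum_congr rfl fun i _ => Finset.sum_congr rfl fun i' _ => ?_
        have hc : ∀ k, (Z tF i ω / ((d i:ℝ) * (1-p)) * (u i ω * X i k)) *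
            (Z tF i' ω / ((d i':ℝ) * (1-p)) * (u i' ω * X i' k))
            = (Z tF i ω / ((d i:ℝ) * (1-p))) * (Z tF i' ω / ((d i':ℝ) * (1-p))) *
              (u i ω * u i' ω) * (X i k * X i' k) := by
          intro k
          ring
        rw [Finset.sum_congr rfl fun k _ => hc k, ← Finset.mul_sum]
        have hc2ii : ∑ k, X i k * X i' k = c2 i i' := rfl
        rw [hc2ii, div_mul_div_comm]
        ring
      rw [hswap1, hswap2]
    -- integrability of the three pieces
    have hmea1 : Measurable fun ω => ∑ k, (β t ω k - βstar k)^2 := by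
      apply Finset.measurable_sum
      intro k _
      exact (((measurable_pi_apply k).comp hβtm).sub measurable_const).pow_const 2
    have hbd1 : ∀ ω:Ω, |∑ k, (β t ω k - βstar k)^2| ≤ ∑ k, (Cb + |βstar k|)^2 := by
      intro ω
      rw [abs_of_nonneg (Finset.sum_nonneg fun k _ => sq_nonneg _)]
      refine Finset.sum_le_sum fun k _ => ?_
      rw [← sq_abs]
      have h1 : |β t ω k - βstar k| ≤ Cb + |βstar k| :=
        le_trans (abs_sub _ _) (add_le_add (hCb ω k) le_rfl)
      exact pow_le_pow_left₀ (abs_nonneg _) h1 2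
    have hint1 : Integrable (fun ω => ∑ k, (β t ω k - βstar k)^2) ℙ :=
      integrable_of_bdd hmea1 hbd1
    have hint2term : ∀ i : Fin m, Integrable
        (fun ω => Z tF i ω / ((d i:ℝ) * (1-p)) * (u i ω)^2) ℙ := by
      intro i
      refine integrable_of_bdd (((hZm i).div_const _).mul ((hum i).pow_const 2))
        (C := (n:ℝ) / ((d i:ℝ) * (1-p)) * (Cu i)^2) (fun ω => ?_)
      rw [abs_mul, abs_div, abs_of_pos (hdenpos i)]
      have hZd : |Z tF i ω| / ((d i:ℝ) * (1-p)) ≤ (n:ℝ) / ((d i:ℝ) * (1-p)) :=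
        div_le_div_of_nonneg_right (hZb i ω) (le_of_lt (hdenpos i))
      have hu2 : |(u i ω)^2| ≤ (Cu i)^2 := by
        rw [abs_pow]
        exact pow_le_pow_left₀ (abs_nonneg _) (hub i ω) 2
      exact mul_le_mul hZd hu2 (abs_nonneg _) (le_of_lt (div_pos hnpos (hdenpos i)))
    have hint3term : ∀ i i' : Fin m, Integrable (fun ω => (Z tF i ω * Z tF i' ω) /
        (((d i:ℝ) * (1-p)) * ((d i':ℝ) * (1-p))) * ((u i ω * u i' ω) * c2 i i')) ℙ := by
      intro i i'
      have hDpos : (0:ℝ) < ((d i:ℝ) * (1-p)) * ((d i':ℝ) * (1-p)) :=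
        mul_pos (hdenpos i) (hdenpos i')
      refine integrable_of_bdd ((((hZm i).mul (hZm i')).div_const _).mul
        (((hum i).mul (hum i')).mul_const _))
        (C := ((n:ℝ)*(n:ℝ)) / (((d i:ℝ) * (1-p)) * ((d i':ℝ) * (1-p)))
          * ((Cu i * Cu i') * |c2 i i'|)) (fun ω => ?_)
      have habs : |(Z tF i ω * Z tF i' ω) / (((d i:ℝ) * (1-p)) * ((d i':ℝ) * (1-p)))
          * ((u i ω * u i' ω) * c2 i i')|
          = (|Z tF i ω| * |Z tF i' ω|) / (((d i:ℝ) * (1-p)) * ((d i':ℝ) * (1-p)))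
            * ((|u i ω| * |u i' ω|) * |c2 i i'|) := by
        rw [abs_mul, abs_div, abs_of_pos hDpos, abs_mul, abs_mul, abs_mul]
      rw [habs]
      refine mul_le_mul (div_le_div_of_nonneg_right ?_ (le_of_lt hDpos)) ?_ ?_ ?_
      · exact mul_le_mul (hZb i ω) (hZb i' ω) (abs_nonneg _) (le_of_lt hnpos)
      · exact mul_le_mul_of_nonneg_right
          (mul_le_mul (hub i ω) (hub i' ω) (abs_nonneg _) (hCu0 i)) (abs_nonneg _)
      · positivity
      · exact div_nonneg (mul_nonneg (le_of_lt hnpos) (le_of_lt hnpos)) (le_of_lt hDpos)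
    set I1 : ℝ := ∫ ω, ∑ k, (β t ω k - βstar k)^2 with hI1
    have hI1nn : 0 ≤ I1 := by
      rw [hI1]
      exact integral_nonneg fun ω => Finset.sum_nonneg fun k _ => sq_nonneg _
    have hf2int : ∫ ω, ∑ i, Z tF i ω / ((d i:ℝ) * (1-p)) * (u i ω)^2 = lam * I1 := by
      rw [integral_finset_sum _ (fun i _ => hint2term i)]
      have hper : ∀ i : Fin m, ∫ ω, Z tF i ω / ((d i:ℝ) * (1-p)) * (u i ω)^2
          = ∫ ω, (u i ω)^2 := by
        intro i
        have hpt : ∀ ω:Ω, Z tF i ω / ((d i:ℝ) * (1-p)) * (u i ω)^2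
            = ((d i:ℝ) * (1-p))⁻¹ * (Z tF i ω * (u i ω)^2) := fun ω => by ring
        simp only [hpt]
        rw [integral_const_mul, hfact1 i, ← mul_assoc,
          inv_mul_cancel₀ (ne_of_gt (hdenpos i)), one_mul]
      rw [Finset.sum_congr rfl fun i _ => hper i,
        ← integral_finset_sum _ (fun i _ => hintu2 i)]
      simp only [hF2]
      rw [integral_const_mul, hI1]
    have hf3int : ∫ ω, ∑ i, ∑ i', (Z tF i ω * Z tF i' ω) /
        (((d i:ℝ) * (1-p)) * ((d i':ℝ) * (1-p))) * ((u i ω * u i' ω) * c2 i i')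
        = ∫ ω, ∑ i, ∑ i', α i i' * c2 i i' * (u i ω * u i' ω) := by
      have hlhs : ∫ ω, ∑ i, ∑ i', (Z tF i ω * Z tF i' ω) /
          (((d i:ℝ) * (1-p)) * ((d i':ℝ) * (1-p))) * ((u i ω * u i' ω) * c2 i i')
          = ∑ i, ∑ i', α i i' * c2 i i' * (∫ ω, u i ω * u i' ω) := by
        rw [integral_finset_sum _
          (fun i _ => integrable_finset_sum _ (fun i' _ => hint3term i i'))]
        refine Finset.sum_congr rfl fun i _ => ?_
        rw [integral_finset_sum _ (fun i' _ => hint3term i i')]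
        refine Finset.sum_congr rfl fun i' _ => ?_
        have hpt : ∀ ω:Ω, (Z tF i ω * Z tF i' ω) /
            (((d i:ℝ) * (1-p)) * ((d i':ℝ) * (1-p))) * ((u i ω * u i' ω) * c2 i i')
            = (c2 i i' / (((d i:ℝ) * (1-p)) * ((d i':ℝ) * (1-p)))) *
              ((Z tF i ω * Z tF i' ω) * (u i ω * u i' ω)) := fun ω => by ring
        simp only [hpt]
        rw [integral_const_mul, hfact2 i i']
        simp only [hα]
        have hDD : ((d i:ℝ) * (1-p)) * ((d i':ℝ) * (1-p))
            = ((d i:ℝ) * (d i':ℝ)) * (1-p)^2 := by ring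
        rw [hDD]
        ring
      have hrhs : ∫ ω, ∑ i, ∑ i', α i i' * c2 i i' * (u i ω * u i' ω)
          = ∑ i, ∑ i', α i i' * c2 i i' * (∫ ω, u i ω * u i' ω) := by
        rw [integral_finset_sum _ (fun i _ => integrable_finset_sum _
          (fun i' _ => ((hintu i i').const_mul _)))]
        refine Finset.sum_congr rfl fun i _ => ?_
        rw [integral_finset_sum _ (fun i' _ => ((hintu i i').const_mul _))]
        refine Finset.sum_congr rfl fun i' _ => ?_
        rw [integral_const_mul]
      rw [hlhs, hrhs]
    -- the pointwise quadratic-form bound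
    have hQb : ∀ ω:Ω, (∑ i, ∑ i', α i i' * c2 i i' * (u i ω * u i' ω))
        ≤ (5/4) * lam^2 * ∑ k, (β t ω k - βstar k)^2 := by
      intro ω
      have hVnn : 0 ≤ ∑ k, (β t ω k - βstar k)^2 :=
        Finset.sum_nonneg fun k _ => sq_nonneg _
      have hF3 : ∑ i, ∑ i', c2 i i' * (u i ω * u i' ω)
          = lam^2 * ∑ k, (β t ω k - βstar k)^2 := by
        have h1 : ∀ i i' : Fin m, c2 i i' * (u i ω * u i' ω)
            = ∑ k, (u i ω * X i k) * (u i' ω * X i' k) := by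
          intro i i'
          have hcc : c2 i i' = ∑ k, X i k * X i' k := rfl
          rw [hcc, Finset.sum_mul]
          refine Finset.sum_congr rfl fun k _ => ?_
          have huu : u i ω * u i' ω = u i ω * u i' ω := rfl
          ring
        rw [Finset.sum_congr rfl fun i _ => Finset.sum_congr rfl fun i' _ => h1 i i',
          ← sum_comm3]
        have h2 : ∀ k : Fin l, ∑ i, ∑ i', (u i ω * X i k) * (u i' ω * X i' k)
            = (∑ i, u i ω * X i k) * (∑ i', u i' ω * X i' k) := by
          intro k
          rw [Finset.sum_mul_sum]
        rw [Finset.sum_congr rfl fun k _ => h2 k,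
          Finset.sum_congr rfl fun k _ => by rw [hUX ω k], Finset.mul_sum]
        exact Finset.sum_congr rfl fun k _ => by ring
      have hsplitted : ∑ i, ∑ i', α i i' * c2 i i' * (u i ω * u i' ω)
          = (1 + p/((1-p)*n)) * (lam^2 * ∑ k, (β t ω k - βstar k)^2)
            + ∑ i, (α i i - (1 + p/((1-p)*n))) * (c2 i i * (u i ω)^2) := by
        have h3 : ∀ i, ∑ i', α i i' * c2 i i' * (u i ω * u i' ω)
            = (∑ i', (1 + p/((1-p)*n)) * (c2 i i' * (u i ω * u i' ω)))
              + (α i i - (1 + p/((1-p)*n))) * (c2 i i * (u i ω)^2) := by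
          intro i
          have h4 : ∀ i', α i i' * c2 i i' * (u i ω * u i' ω)
              = (1 + p/((1-p)*n)) * (c2 i i' * (u i ω * u i' ω))
                + (if i' = i then (α i i - (1 + p/((1-p)*n))) * (c2 i i * (u i ω)^2)
                  else 0) := by
            intro i'
            by_cases h : i' = i
            · subst h
              rw [if_pos rfl]
              ring
            · rw [hαoff i i' (fun hc => h hc.symm), if_neg h]
              ring
          rw [Finset.sum_congr rfl fun i' _ => h4 i', Finset.sum_add_distrib]
          congr 1
          rw [Finset.sum_ite_eq' univ i
            (fun _ => (α i i - (1 + p/((1-p)*n))) * (c2 i i * (u i ω)^2))]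
          simp
        rw [Finset.sum_congr rfl fun i _ => h3 i, Finset.sum_add_distrib]
        congr 1
        have h5 : ∀ i, ∑ i', (1 + p/((1-p)*n)) * (c2 i i' * (u i ω * u i' ω))
            = (1 + p/((1-p)*n)) * ∑ i', c2 i i' * (u i ω * u i' ω) :=
          fun i => (Finset.mul_sum _ _ _).symm
        rw [Finset.sum_congr rfl fun i _ => h5 i, ← Finset.mul_sum, hF3]
      rw [hsplitted]
      have hdiag : ∀ i, (α i i - (1 + p/((1-p)*n))) * (c2 i i * (u i ω)^2)
          ≤ (p/((1-p)*σ)) * (u i ω)^2 := by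
        intro i
        have hδ : α i i - (1 + p/((1-p)*n)) = p/((1-p)*(d i)) - p/((1-p)*n) := by
          rw [hαdiag i]
          ring
        have hc2d : c2 i i = (d i:ℝ)/σ := by
          have hcc : c2 i i = ∑ k, X i k ^ 2 := by
            have hcc0 : c2 i i = ∑ k, X i k * X i k := rfl
            rw [hcc0]
            exact Finset.sum_congr rfl fun k _ => (pow_two _).symm
          rw [hcc, eq_div_iff (ne_of_gt hσpos), mul_comm]
          exact (hw i).symm
        have hkey : (p/((1-p)*(d i)) - p/((1-p)*n)) * ((d i:ℝ)/σ) ≤ p/((1-p)*σ) := by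
          have hs1 : 0 ≤ p/((1-p)*n) := div_nonneg hp0 (le_of_lt (mul_pos h1p hnpos))
          have hs2 : 0 ≤ (d i:ℝ)/σ := le_of_lt (div_pos (hd0 i) hσpos)
          calc (p/((1-p)*(d i)) - p/((1-p)*n)) * ((d i:ℝ)/σ)
              ≤ (p/((1-p)*(d i))) * ((d i:ℝ)/σ) :=
                mul_le_mul_of_nonneg_right (by linarith) hs2
            _ = p/((1-p)*σ) := by
                rw [div_mul_div_comm, mul_comm p ((d i:ℝ)),
                  show (1-p) * (d i:ℝ) * σ = (d i:ℝ) * ((1-p) * σ) from by ring,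
                  mul_div_mul_left _ _ (ne_of_gt (hd0 i))]
        calc (α i i - (1 + p/((1-p)*n))) * (c2 i i * (u i ω)^2)
            = ((p/((1-p)*(d i)) - p/((1-p)*n)) * ((d i:ℝ)/σ)) * (u i ω)^2 := by
              rw [hδ, hc2d]
              ring
          _ ≤ (p/((1-p)*σ)) * (u i ω)^2 :=
              mul_le_mul_of_nonneg_right hkey (sq_nonneg _)
      have hsum2 : ∑ i, (α i i - (1 + p/((1-p)*n))) * (c2 i i * (u i ω)^2)
          ≤ (p/((1-p)*σ)) * (lam * ∑ k, (β t ω k - βstar k)^2) := by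
        calc ∑ i, (α i i - (1 + p/((1-p)*n))) * (c2 i i * (u i ω)^2)
            ≤ ∑ i, (p/((1-p)*σ)) * (u i ω)^2 := Finset.sum_le_sum fun i _ => hdiag i
          _ = (p/((1-p)*σ)) * ∑ i, (u i ω)^2 := (Finset.mul_sum _ _ _).symm
          _ = (p/((1-p)*σ)) * (lam * ∑ k, (β t ω k - βstar k)^2) := by rw [hF2 ω]
      have hc1b : (1 + p/((1-p)*n)) * (lam^2 * ∑ k, (β t ω k - βstar k)^2)
          ≤ (9/8) * (lam^2 * ∑ k, (β t ω k - βstar k)^2) := by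
        refine mul_le_mul_of_nonneg_right (by linarith [key8a]) ?_
        exact mul_nonneg (sq_nonneg _) hVnn
      have hc2b : (p/((1-p)*σ)) * (lam * ∑ k, (β t ω k - βstar k)^2)
          ≤ (lam/8) * (lam * ∑ k, (β t ω k - βstar k)^2) :=
        mul_le_mul_of_nonneg_right key8b (mul_nonneg hlam.le hVnn)
      calc (1 + p/((1-p)*n)) * (lam^2 * ∑ k, (β t ω k - βstar k)^2)
          + ∑ i, (α i i - (1 + p/((1-p)*n))) * (c2 i i * (u i ω)^2)
          ≤ (9/8) * (lam^2 * ∑ k, (β t ω k - βstar k)^2)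
            + (lam/8) * (lam * ∑ k, (β t ω k - βstar k)^2) :=
            add_le_add hc1b (le_trans hsum2 hc2b)
        _ = (5/4) * lam^2 * ∑ k, (β t ω k - βstar k)^2 := by ring
    -- integrate the bound
    have hQint : Integrable (fun ω => ∑ i, ∑ i', α i i' * c2 i i' * (u i ω * u i' ω)) ℙ :=
      integrable_finset_sum _ (fun i _ => integrable_finset_sum _
        (fun i' _ => ((hintu i i').const_mul _)))
    have hQle : ∫ ω, ∑ i, ∑ i', α i i' * c2 i i' * (u i ω * u i' ω)
        ≤ (5/4) * lam^2 * I1 := by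
      calc ∫ ω, ∑ i, ∑ i', α i i' * c2 i i' * (u i ω * u i' ω)
          ≤ ∫ ω, (5/4) * lam^2 * ∑ k, (β t ω k - βstar k)^2 :=
            integral_mono hQint (hint1.const_mul _) hQb
        _ = (5/4) * lam^2 * I1 := by rw [integral_const_mul, hI1]
    -- put it together
    have hIeq : ∫ ω, ∑ k, (β (t+1) ω k - βstar k)^2
        = I1 - 2 * γ (t+1) * (lam * I1)
          + (γ (t+1))^2 * ∫ ω, ∑ i, ∑ i', α i i' * c2 i i' * (u i ω * u i' ω) := by
      simp only [hexp]
      have hi2' : Integrable (fun ω => 2 * γ (t+1) *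
          ∑ i, Z tF i ω / ((d i:ℝ) * (1-p)) * (u i ω)^2) ℙ :=
        (integrable_finset_sum _ (fun i _ => hint2term i)).const_mul _
      have hi3' : Integrable (fun ω => (γ (t+1))^2 * ∑ i, ∑ i',
          (Z tF i ω * Z tF i' ω) / (((d i:ℝ) * (1-p)) * ((d i':ℝ) * (1-p))) *
            ((u i ω * u i' ω) * c2 i i')) ℙ :=
        (integrable_finset_sum _ (fun i _ => integrable_finset_sum _
          (fun i' _ => hint3term i i'))).const_mul _
      have hi12 : Integrable (fun ω => (∑ k, (β t ω k - βstar k)^2) - 2 * γ (t+1) *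
          ∑ i, Z tF i ω / ((d i:ℝ) * (1-p)) * (u i ω)^2) ℙ := hint1.sub hi2'
      rw [integral_add hi12 hi3', integral_sub hint1 hi2',
        integral_const_mul, integral_const_mul, hf2int, hf3int, hI1]
    rw [hIeq]
    have hγlam : γ (t+1) * lam = gf (t+1) := by
      rw [hγval (t+1), hgf]
      field_simp
    have hg0 : 0 < gf (t+1) := hgpos (t+1) (Nat.succ_le_succ (Nat.zero_le t))
    have hg2 : gf (t+1) ≤ 1/2 := hghalf (t+1)
    have hstep1 : I1 - 2 * γ (t+1) * (lam * I1)
        + (γ (t+1))^2 * ∫ ω, ∑ i, ∑ i', α i i' * c2 i i' * (u i ω * u i' ω)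
        ≤ I1 - 2 * γ (t+1) * (lam * I1) + (γ (t+1))^2 * ((5/4) * lam^2 * I1) := by
      have := mul_le_mul_of_nonneg_left hQle (sq_nonneg (γ (t+1)))
      linarith
    refine le_trans hstep1 ?_
    have hexpand : I1 - 2 * γ (t+1) * (lam * I1) + (γ (t+1))^2 * ((5/4) * lam^2 * I1)
        = I1 - 2 * (γ (t+1) * lam) * I1 + (5/4) * (γ (t+1) * lam)^2 * I1 := by ring
    rw [hexpand, hγlam]
    have h54 : (5/4) * (gf (t+1))^2 ≤ gf (t+1) := by nlinarith
    nlinarith [mul_le_mul_of_nonneg_right h54 hI1nn]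
  -- ## Iterate the contraction
  have hglue : ∀ t : ℕ, t ≤ T → (∫ ω, ∑ k, (β t ω k - βstar k)^2)
      ≤ (∏ s ∈ Finset.Icc 1 t, (1 - gf s)) * ∫ ω, ∑ k, (β 0 ω k - βstar k)^2 := by
    intro t
    induction t with
    | zero => intro _; simp
    | succ t ih =>
      intro ht1
      have ht : t < T := lt_of_lt_of_le (Nat.lt_succ_self t) ht1
      have h1 := step t ht
      have h2 := ih (le_of_lt ht)
      have h3 : 0 ≤ 1 - gf (t+1) := by linarith [hghalf (t+1)]
      calc ∫ ω, ∑ k, (β (t+1) ω k - βstar k)^2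
          ≤ (1 - gf (t+1)) * ∫ ω, ∑ k, (β t ω k - βstar k)^2 := h1
        _ ≤ (1 - gf (t+1)) * ((∏ s ∈ Finset.Icc 1 t, (1 - gf s)) *
            ∫ ω, ∑ k, (β 0 ω k - βstar k)^2) := mul_le_mul_of_nonneg_left h2 h3
        _ = (∏ s ∈ Finset.Icc 1 (t+1), (1 - gf s)) *
            ∫ ω, ∑ k, (β 0 ω k - βstar k)^2 := by
            rw [Finset.prod_Icc_succ_top (Nat.le_add_left 1 t)]
            ring
  -- ## The product is at most ε²
  have hTpos : (0:ℝ) < T := by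
    have h8 : (8:ℝ) ≤ (T:ℝ) := le_trans (by linarith) hT
    linarith
  have hprod : (∏ s ∈ Finset.Icc 1 T, (1 - gf s)) ≤ ε^2 := by
    have h0 : ∀ s ∈ Finset.Icc 1 T, 0 ≤ 1 - gf s := fun s _ => by linarith [hghalf s]
    have h1 : ∀ s ∈ Finset.Icc 1 T, (1 - gf s) ≤ Real.exp (-gf s) := fun s _ => by
      have := Real.add_one_le_exp (-gf s)
      linarith
    calc ∏ s ∈ Finset.Icc 1 T, (1 - gf s)
        ≤ ∏ s ∈ Finset.Icc 1 T, Real.exp (-gf s) := Finset.prod_le_prod h0 h1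
      _ = Real.exp (∑ s ∈ Finset.Icc 1 T, -gf s) := (Real.exp_sum _ _).symm
      _ ≤ Real.exp (-L) := by
          apply Real.exp_le_exp.mpr
          have hsum : L ≤ ∑ s ∈ Finset.Icc 1 T, gf s := by
            have hlow : ∀ s ∈ Finset.Icc 1 T, min (1/2 : ℝ) (L / T) ≤ gf s := by
              intro s hs
              rw [Finset.mem_Icc] at hs
              have hs0 : (0:ℝ) < s := by
                have : 0 < s := hs.1
                exact_mod_cast this
              have hsT : (s:ℝ) ≤ (T:ℝ) := by exact_mod_cast hs.2
              have hLT : L / (T:ℝ) ≤ L / (s:ℝ) :=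
                div_le_div_of_nonneg_left (by linarith) hs0 hsT
              exact min_le_min le_rfl hLT
            have hcard : (Finset.Icc 1 T).card = T := by
              rw [Nat.card_Icc]
              omega
            rcases le_or_gt (L / T) (1/2 : ℝ) with hc | hc
            · have hmin : min (1/2 : ℝ) (L/T) = L/T := min_eq_right hc
              calc L = (T:ℝ) * (L / T) := by field_simp
                _ = ∑ _s ∈ Finset.Icc 1 T, min (1/2 : ℝ) (L/T) := by
                    rw [Finset.sum_const, hcard, nsmul_eq_mul, hmin]
                _ ≤ ∑ s ∈ Finset.Icc 1 T, gf s := Finset.sum_le_sum hlow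
            · have hmin : min (1/2 : ℝ) (L/T) = 1/2 := min_eq_left hc.le
              calc L ≤ (T:ℝ) * (1/2 : ℝ) := by linarith
                _ = ∑ _s ∈ Finset.Icc 1 T, min (1/2 : ℝ) (L/T) := by
                    rw [Finset.sum_const, hcard, nsmul_eq_mul, hmin]
                _ ≤ ∑ s ∈ Finset.Icc 1 T, gf s := Finset.sum_le_sum hlow
          have hneg : ∑ s ∈ Finset.Icc 1 T, -gf s = -∑ s ∈ Finset.Icc 1 T, gf s := by
            rw [← Finset.sum_neg_distrib]
          rw [hneg]
          linarith
      _ = ε^2 := hexpL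
  -- ## Conclusion
  have h0eq : ∫ ω, ∑ k, (β 0 ω k - βstar k)^2 = ∑ k, (β0 k - βstar k)^2 := by
    have hpt : ∀ ω:Ω, ∑ k, (β 0 ω k - βstar k)^2 = ∑ k, (β0 k - βstar k)^2 := fun ω => by
      rw [hβ0]
    simp only [hpt]
    simp [measure_univ]
  have hEnn : 0 ≤ ∑ k, (β0 k - βstar k)^2 := Finset.sum_nonneg fun k _ => sq_nonneg _
  calc ∫ ω, ∑ k, (β T ω k - βstar k)^2
      ≤ (∏ s ∈ Finset.Icc 1 T, (1 - gf s)) * ∫ ω, ∑ k, (β 0 ω k - βstar k)^2 :=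
        hglue T le_rfl
    _ = (∏ s ∈ Finset.Icc 1 T, (1 - gf s)) * ∑ k, (β0 k - βstar k)^2 := by rw [h0eq]
    _ ≤ ε^2 * ∑ k, (β0 k - βstar k)^2 := mul_le_mul_of_nonneg_right hprod hEnn
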